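/- Let m_r > m_b > 0. Then as s → (m_r − m_b)² from below, the first term of the bubble function, (√λ(s,m_r²,m_b²)/(2s))·ln((m_r²+m_b²−s−√λ(s,m_r²,m_b²))/(m_r²+m_b²−s+√λ(s,m_r²,m_b²))), tends to 0, and hence B₂(s) tends to the finite value ((m_r+m_b)/(2(m_r−m_b)))·ln(m_r²/m_b²). In particular the principal sheet of the bubble amplitude is free of singularities at the pseudo-threshold s = (m_r − m_b)². -/

import Mathlib

open Filter

/-- The Källén function λ(a,b,c) := a² + b² + c² − 2(ab + bc + ca). -/
noncomputable def kallen (a b c : ℝ) : ℝ := a ^ 2 + b ^ 2 + c ^ 2 - 2 * (a * b + b * c + c * a)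

/-- The subtracted bubble function on the principal sheet:
`B₂(s) = (√λ/(2s))·ln((m_r²+m_b²−s−√λ)/(m_r²+m_b²−s+√λ)) + ((m_r²−m_b²)/(2s))·ln(m_r²/m_b²)`,
with `λ = λ(s, m_r², m_b²)`. -/
noncomputable def B2 (m_r m_b s : ℝ) : ℝ :=
  Real.sqrt (kallen s (m_r ^ 2) (m_b ^ 2)) / (2 * s) *
      Real.log ((m_r ^ 2 + m_b ^ 2 - s - Real.sqrt (kallen s (m_r ^ 2) (m_b ^ 2))) /
        (m_r ^ 2 + m_b ^ 2 - s + Real.sqrt (kallen s (m_r ^ 2) (m_b ^ 2)))) +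
    (m_r ^ 2 - m_b ^ 2) / (2 * s) * Real.log (m_r ^ 2 / m_b ^ 2)

/-- For `m_r > m_b > 0`, as `s → (m_r − m_b)²` from below, the first (square-root times
logarithm) term of the bubble function tends to `0`, and hence `B₂(s)` tends to the
finite value `((m_r+m_b)/(2(m_r−m_b)))·ln(m_r²/m_b²)`: the principal sheet of the bubble
amplitude is free of singularities at the pseudo-threshold `s = (m_r − m_b)²`. -/
theorem bubble_regular_at_pseudothreshold (m_r m_b : ℝ) (hb : 0 < m_b) (hrb : m_b < m_r) :
    Tendsto
      (fun s : ℝ =>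
        Real.sqrt (kallen s (m_r ^ 2) (m_b ^ 2)) / (2 * s) *
          Real.log ((m_r ^ 2 + m_b ^ 2 - s - Real.sqrt (kallen s (m_r ^ 2) (m_b ^ 2))) /
            (m_r ^ 2 + m_b ^ 2 - s + Real.sqrt (kallen s (m_r ^ 2) (m_b ^ 2)))))
      (nhdsWithin ((m_r - m_b) ^ 2) (Set.Iio ((m_r - m_b) ^ 2))) (nhds 0) ∧
    Tendsto (fun s : ℝ => B2 m_r m_b s)
      (nhdsWithin ((m_r - m_b) ^ 2) (Set.Iio ((m_r - m_b) ^ 2)))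
      (nhds ((m_r + m_b) / (2 * (m_r - m_b)) * Real.log (m_r ^ 2 / m_b ^ 2))) := by
  have hdm : (0:ℝ) < m_r - m_b := by linarith
  set s0 : ℝ := (m_r - m_b) ^ 2 with hs0def
  have hs0pos : 0 < s0 := by positivity
  have hk0 : kallen s0 (m_r ^ 2) (m_b ^ 2) = 0 := by
    simp only [hs0def]; unfold kallen; ring
  have hcontk : Continuous fun s : ℝ => kallen s (m_r ^ 2) (m_b ^ 2) := by
    unfold kallen; fun_prop
  have hcontsq : Continuous fun s : ℝ => Real.sqrt (kallen s (m_r ^ 2) (m_b ^ 2)) :=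
    Real.continuous_sqrt.comp hcontk
  have h2s0 : (2:ℝ) * s0 ≠ 0 := by nlinarith
  have h1 : Tendsto (fun s : ℝ => Real.sqrt (kallen s (m_r ^ 2) (m_b ^ 2)) / (2 * s))
      (nhds s0) (nhds 0) := by
    have : ContinuousAt (fun s : ℝ => Real.sqrt (kallen s (m_r ^ 2) (m_b ^ 2)) / (2 * s)) s0 :=
      (hcontsq.continuousAt).div (by fun_prop) h2s0
    have := this.tendsto
    simpa [hk0, Real.sqrt_zero] using this
  have hden0 : m_r ^ 2 + m_b ^ 2 - s0 = 2 * (m_r * m_b) := by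
    simp only [hs0def]; ring
  have hmbpos : (0:ℝ) < 2 * (m_r * m_b) := by nlinarith
  have h2 : Tendsto (fun s : ℝ =>
      Real.log ((m_r ^ 2 + m_b ^ 2 - s - Real.sqrt (kallen s (m_r ^ 2) (m_b ^ 2))) /
        (m_r ^ 2 + m_b ^ 2 - s + Real.sqrt (kallen s (m_r ^ 2) (m_b ^ 2)))))
      (nhds s0) (nhds 0) := by
    have harg : ContinuousAt (fun s : ℝ =>
        (m_r ^ 2 + m_b ^ 2 - s - Real.sqrt (kallen s (m_r ^ 2) (m_b ^ 2))) /
        (m_r ^ 2 + m_b ^ 2 - s + Real.sqrt (kallen s (m_r ^ 2) (m_b ^ 2)))) s0 := by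
      apply ContinuousAt.div (by fun_prop) (by fun_prop)
      rw [hk0, Real.sqrt_zero, hden0]
      positivity
    have hargval : (m_r ^ 2 + m_b ^ 2 - s0 - Real.sqrt (kallen s0 (m_r ^ 2) (m_b ^ 2))) /
        (m_r ^ 2 + m_b ^ 2 - s0 + Real.sqrt (kallen s0 (m_r ^ 2) (m_b ^ 2))) = 1 := by
      rw [hk0, Real.sqrt_zero, hden0]
      field_simp
      rw [sub_zero, add_zero]
      exact div_self (ne_of_gt (by nlinarith))
    have : ContinuousAt (fun s : ℝ =>
        Real.log ((m_r ^ 2 + m_b ^ 2 - s - Real.sqrt (kallen s (m_r ^ 2) (m_b ^ 2))) /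
          (m_r ^ 2 + m_b ^ 2 - s + Real.sqrt (kallen s (m_r ^ 2) (m_b ^ 2))))) s0 :=
      (Real.continuousAt_log (by rw [hargval]; norm_num)).comp harg
    have := this.tendsto
    simpa [Function.comp, hargval] using this
  have hfirst : Tendsto
      (fun s : ℝ =>
        Real.sqrt (kallen s (m_r ^ 2) (m_b ^ 2)) / (2 * s) *
          Real.log ((m_r ^ 2 + m_b ^ 2 - s - Real.sqrt (kallen s (m_r ^ 2) (m_b ^ 2))) /
            (m_r ^ 2 + m_b ^ 2 - s + Real.sqrt (kallen s (m_r ^ 2) (m_b ^ 2)))))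
      (nhdsWithin s0 (Set.Iio s0)) (nhds 0) := by
    have := (h1.mul h2).mono_left (nhdsWithin_le_nhds (s := Set.Iio s0))
    simpa using this
  refine ⟨hfirst, ?_⟩
  have hsecond : Tendsto (fun s : ℝ => (m_r ^ 2 - m_b ^ 2) / (2 * s) * Real.log (m_r ^ 2 / m_b ^ 2))
      (nhdsWithin s0 (Set.Iio s0))
      (nhds ((m_r + m_b) / (2 * (m_r - m_b)) * Real.log (m_r ^ 2 / m_b ^ 2))) := by
    have hca : ContinuousAt (fun s : ℝ => (m_r ^ 2 - m_b ^ 2) / (2 * s) * Real.log (m_r ^ 2 / m_b ^ 2)) s0 :=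
      (((continuousAt_const).div (by fun_prop) h2s0).mul continuousAt_const)
    have hval : (m_r ^ 2 - m_b ^ 2) / (2 * s0) = (m_r + m_b) / (2 * (m_r - m_b)) := by
      rw [hs0def]; field_simp; ring
    have := hca.tendsto.mono_left (nhdsWithin_le_nhds (s := Set.Iio s0))
    rw [hval] at this
    exact this
  have := hfirst.add hsecond
  simpa [B2] using this
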